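/- Suppose f is holomorphic near z₀ with f(z₀) = f'(z₀) = a (a ≠ 0), f''(z₀) ≠ 0, and f satisfies the identity f''·(f' - f) = ((k+1)b/(a - b))·(f - a)(f' - b) in a neighbourhood of z₀, where b ≠ 0, a ≠ b, k ≥ 1. Then f''(z₀) satisfies the quadratic equation f''(z₀)^2 - a·f''(z₀) - (k+1)ab = 0, i.e. f''(z₀) = a/2 ± √(a² + 4(k+1)ab)/2. -/

import Mathlib

open Filter Topology

private lemma analyticAt_deriv' {f : ℂ → ℂ} {z₀ : ℂ} (hf : AnalyticAt ℂ f z₀) :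
    AnalyticAt ℂ (deriv f) z₀ := by
  have h : AnalyticOnNhd ℂ f {z | AnalyticAt ℂ f z} := fun x hx => hx
  exact h.deriv z₀ hf

theorem stmt_13 (a b : ℂ) (ha : a ≠ 0) (hb : b ≠ 0) (hab : a ≠ b)
    (k : ℕ) (hk : 1 ≤ k) (f : ℂ → ℂ) (z₀ : ℂ)
    (hf : AnalyticAt ℂ f z₀) (hf0 : f z₀ = a) (hf1 : deriv f z₀ = a)
    (hf2 : iteratedDeriv 2 f z₀ ≠ 0)
    (heq : ∀ᶠ z in 𝓝 z₀, iteratedDeriv 2 f z * (deriv f z - f z) =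
      ((k + 1) * b / (a - b)) * ((f z - a) * (deriv f z - b))) :
    (iteratedDeriv 2 f z₀) ^ 2 - a * iteratedDeriv 2 f z₀ - (k + 1) * a * b = 0 := by
  have hE : iteratedDeriv 2 f = deriv (deriv f) := by
    rw [iteratedDeriv_succ, iteratedDeriv_one]
  have hd1 : AnalyticAt ℂ (deriv f) z₀ := analyticAt_deriv' hf
  have hd2 : AnalyticAt ℂ (deriv (deriv f)) z₀ := analyticAt_deriv' hd1
  have Df : DifferentiableAt ℂ f z₀ := hf.differentiableAt
  have Df1 : DifferentiableAt ℂ (deriv f) z₀ := hd1.differentiableAt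
  have Df2 : DifferentiableAt ℂ (deriv (deriv f)) z₀ := hd2.differentiableAt
  rw [hE] at heq hf2 ⊢
  have hderiv : deriv (fun z => deriv (deriv f) z * (deriv f z - f z)) z₀ =
      deriv (fun z => ((k + 1 : ℂ) * b / (a - b)) * ((f z - a) * (deriv f z - b))) z₀ :=
    Filter.EventuallyEq.deriv_eq heq
  rw [deriv_fun_mul Df2 (show DifferentiableAt ℂ (fun z => deriv f z - f z) z₀ from Df1.sub Df), deriv_const_mul _ (show
      DifferentiableAt ℂ (fun z => (f z - a) * (deriv f z - b)) z₀ from (Df.sub_const a).mul (Df1.sub_const b)),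
    deriv_fun_mul (Df.sub_const a) (Df1.sub_const b), deriv_fun_sub Df1 Df,
    deriv_sub_const, deriv_sub_const] at hderiv
  have hab' : a - b ≠ 0 := sub_ne_zero.mpr hab
  rw [hf0, hf1] at hderiv
  simp only [sub_self, mul_zero, zero_mul, add_zero, zero_add] at hderiv
  -- hderiv : deriv (deriv f) z₀ * (deriv (deriv f) z₀ - a) = C * (a * (a - b))
  have key : ((k + 1 : ℂ) * b / (a - b)) * (a * (a - b)) = (k + 1) * a * b := by
    field_simp
  rw [key] at hderiv
  linear_combination hderiv
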